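/- In the Laver table of order 2^n, for every p, q in {1,...,2^n} there exists a unique s in {1,...,2^n} such that p ⋆ₙ (q ⋆ₙ r) = s ⋆ₙ r for all r; this s, denoted p ∘ₙ q, satisfies (p ∘ₙ q) + 1 ≡ p ⋆ₙ (q + 1) mod 2^n, and ∘ₙ is associative. -/
import Mathlib


def LaverAxioms (N : ℕ) (star : ℕ → ℕ → ℕ) : Prop :=
  (∀ p q, p ∈ Set.Icc 1 N → q ∈ Set.Icc 1 N → star p q ∈ Set.Icc 1 N) ∧
  (∀ p ∈ Set.Icc 1 N, star p 1 = p % N + 1) ∧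
  (∀ p q, p ∈ Set.Icc 1 N → q ∈ Set.Icc 1 N →
    star p (star q 1) = star (star p q) (star p 1))

namespace LaverAux

variable {N : ℕ} {star : ℕ → ℕ → ℕ}

lemma mem_icc {x : ℕ} (h1 : 1 ≤ x) (h2 : x ≤ N) : x ∈ Set.Icc 1 N :=
  Set.mem_Icc.mpr ⟨h1, h2⟩

lemma cl (h : LaverAxioms N star) {p q : ℕ} (hp1 : 1 ≤ p) (hpN : p ≤ N)
    (hq1 : 1 ≤ q) (hqN : q ≤ N) : 1 ≤ star p q ∧ star p q ≤ N :=
  Set.mem_Icc.mp (h.1 p q (mem_icc hp1 hpN) (mem_icc hq1 hqN))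

lemma one_ap (h : LaverAxioms N star) {p : ℕ} (hp1 : 1 ≤ p) (hpN : p ≤ N) :
    star p 1 = p % N + 1 := h.2.1 p (mem_icc hp1 hpN)

lemma rec_ap (h : LaverAxioms N star) {p q : ℕ} (hp1 : 1 ≤ p) (hpN : p ≤ N)
    (hq1 : 1 ≤ q) (hqN : q ≤ N) :
    star p (star q 1) = star (star p q) (star p 1) :=
  h.2.2 p q (mem_icc hp1 hpN) (mem_icc hq1 hqN)

/-- Row `N` is the identity. -/
lemma top (hN1 : 1 ≤ N) (h : LaverAxioms N star) :
    ∀ q, 1 ≤ q → q ≤ N → star N q = q := by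
  have key : ∀ t q, 1 ≤ q → q ≤ N → q ≤ t → star N q = q := by
    intro t
    induction t with
    | zero => intro q hq1 _ ht; omega
    | succ t ih =>
      intro q hq1 hqN hqt
      have h1 : star N 1 = 1 := by
        rw [one_ap h hN1 le_rfl, Nat.mod_self]
      by_cases hq : q = 1
      · rw [hq]; exact h1
      · have hq0 : 1 ≤ q - 1 := by omega
        have hq0N : q - 1 ≤ N := by omega
        have hq0lt : q - 1 < N := by omega
        have hs : star (q - 1) 1 = q := by
          rw [one_ap h hq0 hq0N, Nat.mod_eq_of_lt hq0lt]; omega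
        have hrec := rec_ap h hN1 le_rfl hq0 hq0N
        rw [hs, h1, ih (q - 1) hq0 hq0N (by omega)] at hrec
        rw [hrec, hs]
  intro q hq1 hqN; exact key N q hq1 hqN hqN

/-- Entries of row `p` (for `p < N`) are strictly greater than `p`. -/
lemma gt_ap (hN1 : 1 ≤ N) (h : LaverAxioms N star) :
    ∀ p q, 1 ≤ p → p < N → 1 ≤ q → q ≤ N → p < star p q := by
  have key : ∀ s p, 1 ≤ p → p < N → N - p ≤ s →
      ∀ t q, 1 ≤ q → q ≤ N → q ≤ t → p < star p q := by
    intro s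
    induction s with
    | zero => intro p _ hp2 hps t q _ _ _; omega
    | succ s ihs =>
      intro p hp1 hp2 hps t
      induction t with
      | zero => intro q hq1 _ h3; omega
      | succ t iht =>
        intro q hq1 hqN hqt
        by_cases hq : q = 1
        · subst hq
          rw [one_ap h hp1 hp2.le, Nat.mod_eq_of_lt hp2]; omega
        · have hq0 : 1 ≤ q - 1 := by omega
          have hq0N : q - 1 ≤ N := by omega
          have e0 : star (q - 1) 1 = q := by
            rw [one_ap h hq0 hq0N, Nat.mod_eq_of_lt (by omega)]; omega
          have e2 : star p 1 = p + 1 := by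
            rw [one_ap h hp1 hp2.le, Nat.mod_eq_of_lt hp2]
          have hrec := rec_ap h hp1 hp2.le hq0 hq0N
          rw [e0, e2] at hrec
          obtain ⟨hX1, hXN⟩ := cl h hp1 hp2.le hq0 hq0N
          have hpX : p < star p (q - 1) := iht (q - 1) hq0 hq0N (by omega)
          by_cases hXeq : star p (q - 1) = N
          · rw [hXeq, top hN1 h (p + 1) (by omega) (by omega)] at hrec
            omega
          · have := ihs (star p (q - 1)) hX1 (by omega) (by omega) N (p + 1)
              (by omega) (by omega) (by omega)
            omega
  intro p q hp1 hp2 hq1 hqN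
  exact key N p hp1 hp2 (by omega) N q hq1 hqN hqN

/-- Column `N` is constant equal to `N`. -/
lemma colN (hN1 : 1 ≤ N) (h : LaverAxioms N star) :
    ∀ p, 1 ≤ p → p ≤ N → star p N = N := by
  intro p hp1 hpN
  by_cases hp : p = N
  · rw [hp]; exact top hN1 h N hN1 le_rfl
  · have hp2 : p < N := by omega
    have h1 : star N 1 = 1 := by rw [one_ap h hN1 le_rfl, Nat.mod_self]
    have h2 : star p 1 = p + 1 := by rw [one_ap h hp1 hpN, Nat.mod_eq_of_lt hp2]
    have hrec := rec_ap h hp1 hpN hN1 le_rfl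
    rw [h1, h2] at hrec
    obtain ⟨hy1, hyN⟩ := cl h hp1 hpN hN1 le_rfl
    by_contra hne
    have hpy : p < star p N := gt_ap hN1 h p N hp1 hp2 hN1 le_rfl
    have := gt_ap hN1 h (star p N) (p + 1) hy1 (by omega) (by omega) (by omega)
    omega

/-- Full left self-distributivity. -/
lemma ld_ap (hN1 : 1 ≤ N) (h : LaverAxioms N star) :
    ∀ p q r, 1 ≤ p → p ≤ N → 1 ≤ q → q ≤ N → 1 ≤ r → r ≤ N →
      star p (star q r) = star (star p q) (star p r) := by
  have caseTop : ∀ q r, 1 ≤ q → q ≤ N → 1 ≤ r → r ≤ N →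
      star N (star q r) = star (star N q) (star N r) := by
    intro q r hq1 hqN hr1 hrN
    obtain ⟨hx1, hxN⟩ := cl h hq1 hqN hr1 hrN
    rw [top hN1 h q hq1 hqN, top hN1 h r hr1 hrN, top hN1 h (star q r) hx1 hxN]
  have caseColN : ∀ p r, 1 ≤ p → p ≤ N → 1 ≤ r → r ≤ N →
      star p (star N r) = star (star p N) (star p r) := by
    intro p r hp1 hpN hr1 hrN
    obtain ⟨hx1, hxN⟩ := cl h hp1 hpN hr1 hrN
    rw [top hN1 h r hr1 hrN, colN hN1 h p hp1 hpN, top hN1 h (star p r) hx1 hxN]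
  have key : ∀ s p, 1 ≤ p → p ≤ N → N - p ≤ s → ∀ q r, 1 ≤ q → q ≤ N →
      1 ≤ r → r ≤ N → star p (star q r) = star (star p q) (star p r) := by
    intro s
    induction s with
    | zero =>
      intro p hp1 hpN hps q r hq1 hqN hr1 hrN
      have : p = N := by omega
      subst this
      exact caseTop q r hq1 hqN hr1 hrN
    | succ s ihs =>
      intro p hp1 hpN hps
      by_cases hpeq : p = N
      · subst hpeq; exact fun q r hq1 hqN hr1 hrN => caseTop q r hq1 hqN hr1 hrN
      · have hp2 : p < N := by omega
        have middle : ∀ u q, 1 ≤ q → q ≤ N → N - q ≤ u → ∀ r, 1 ≤ r → r ≤ N →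
            star p (star q r) = star (star p q) (star p r) := by
          intro u
          induction u with
          | zero =>
            intro q hq1 hqN hqu r hr1 hrN
            have : q = N := by omega
            subst this
            exact caseColN p r hp1 hpN hr1 hrN
          | succ u ihu =>
            intro q hq1 hqN hqu
            by_cases hqeq : q = N
            · subst hqeq; exact fun r hr1 hrN => caseColN p r hp1 hpN hr1 hrN
            · have hq2 : q < N := by omega
              have inner : ∀ t r, 1 ≤ r → r ≤ N → r ≤ t →
                  star p (star q r) = star (star p q) (star p r) := by
                intro t
                induction t with
                | zero => intro r hr1 _ h3; omega
                | succ t iht =>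
                  intro r hr1 hrN hrt
                  by_cases hre : r = 1
                  · subst hre; exact rec_ap h hp1 hpN hq1 hqN
                  · have hr0_1 : 1 ≤ r - 1 := by omega
                    have hr0N : r - 1 ≤ N := by omega
                    have e0 : star (r - 1) 1 = r := by
                      rw [one_ap h hr0_1 hr0N, Nat.mod_eq_of_lt (by omega)]; omega
                    obtain ⟨hA1, hAN⟩ := cl h hq1 hqN hr0_1 hr0N
                    obtain ⟨hB1, hBN⟩ := cl h hq1 hqN (le_refl 1) hN1
                    have hqA : q < star q (r - 1) := gt_ap hN1 h q (r - 1) hq1 hq2 hr0_1 hr0N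
                    have e1 : star q r = star (star q (r - 1)) (star q 1) := by
                      have := rec_ap h hq1 hqN hr0_1 hr0N
                      rwa [e0] at this
                    have e2 : star p (star (star q (r - 1)) (star q 1)) =
                        star (star p (star q (r - 1))) (star p (star q 1)) :=
                      ihu (star q (r - 1)) hA1 hAN (by omega) (star q 1) hB1 hBN
                    have e3 : star p (star q (r - 1)) =
                        star (star p q) (star p (r - 1)) :=
                      iht (r - 1) hr0_1 hr0N (by omega)
                    have e4 : star p (star q 1) = star (star p q) (star p 1) :=
                      rec_ap h hp1 hpN hq1 hqN
                    obtain ⟨hC1, hCN⟩ := cl h hp1 hpN hq1 hqN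
                    obtain ⟨hD1, hDN⟩ := cl h hp1 hpN hr0_1 hr0N
                    obtain ⟨hE1, hEN⟩ := cl h hp1 hpN (le_refl 1) hN1
                    have hpC : p < star p q := gt_ap hN1 h p q hp1 hp2 hq1 hqN
                    have e5 : star (star p q) (star (star p (r - 1)) (star p 1)) =
                        star (star (star p q) (star p (r - 1)))
                          (star (star p q) (star p 1)) :=
                      ihs (star p q) hC1 hCN (by omega) (star p (r - 1)) (star p 1)
                        hD1 hDN hE1 hEN
                    have e6 : star p (star (r - 1) 1) =
                        star (star p (r - 1)) (star p 1) :=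
                      rec_ap h hp1 hpN hr0_1 hr0N
                    rw [e0] at e6
                    calc star p (star q r)
                        = star p (star (star q (r - 1)) (star q 1)) := by rw [e1]
                      _ = star (star p (star q (r - 1))) (star p (star q 1)) := e2
                      _ = star (star (star p q) (star p (r - 1)))
                            (star (star p q) (star p 1)) := by rw [e3, e4]
                      _ = star (star p q) (star (star p (r - 1)) (star p 1)) := e5.symm
                      _ = star (star p q) (star p r) := by rw [← e6]
              exact fun r hr1 hrN => inner N r hr1 hrN hrN
        exact fun q r hq1 hqN hr1 hrN => middle N q hq1 hqN (by omega) r hr1 hrN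
  intro p q r hp1 hpN hq1 hqN hr1 hrN
  exact key N p hp1 hpN (by omega) q r hq1 hqN hr1 hrN

/-- The composition operation. -/
def lcomp (N : ℕ) (star : ℕ → ℕ → ℕ) (p q : ℕ) : ℕ :=
  if star p (q % N + 1) = 1 then N else star p (q % N + 1) - 1

lemma modb (hN1 : 1 ≤ N) {q : ℕ} : 1 ≤ q % N + 1 ∧ q % N + 1 ≤ N := by
  have := Nat.mod_lt q (show 0 < N by omega)
  omega

lemma lcomp_bounds (hN1 : 1 ≤ N) (h : LaverAxioms N star) {p q : ℕ}
    (hp1 : 1 ≤ p) (hpN : p ≤ N) :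
    1 ≤ lcomp N star p q ∧ lcomp N star p q ≤ N ∧
      lcomp N star p q % N + 1 = star p (q % N + 1) := by
  obtain ⟨hm1, hm2⟩ := modb (q := q) hN1
  obtain ⟨hw1, hwN⟩ := cl h hp1 hpN hm1 hm2
  unfold lcomp
  by_cases hw : star p (q % N + 1) = 1
  · rw [if_pos hw, Nat.mod_self, hw]
    exact ⟨hN1, le_rfl, rfl⟩
  · rw [if_neg hw]
    have h2 : 2 ≤ star p (q % N + 1) := by omega
    have : (star p (q % N + 1) - 1) % N = star p (q % N + 1) - 1 :=
      Nat.mod_eq_of_lt (by omega)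
    omega

lemma lcomp_spec (hN1 : 1 ≤ N) (h : LaverAxioms N star) {p q : ℕ}
    (hp1 : 1 ≤ p) (hpN : p ≤ N) (hq1 : 1 ≤ q) (hqN : q ≤ N) :
    ∀ r, 1 ≤ r → r ≤ N → star p (star q r) = star (lcomp N star p q) r := by
  obtain ⟨hs1, hsN, hsucc⟩ := lcomp_bounds hN1 h hp1 hpN (q := q)
  have hq_one : star q 1 = q % N + 1 := one_ap h hq1 hqN
  have key : ∀ t r, 1 ≤ r → r ≤ N → r ≤ t →
      star p (star q r) = star (lcomp N star p q) r := by
    intro t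
    induction t with
    | zero => intro r hr1 _ h3; omega
    | succ t iht =>
      intro r hr1 hrN hrt
      by_cases hr : r = 1
      · subst hr
        rw [hq_one, one_ap h hs1 hsN, hsucc]
      · have hr0_1 : 1 ≤ r - 1 := by omega
        have hr0N : r - 1 ≤ N := by omega
        have e0 : star (r - 1) 1 = r := by
          rw [one_ap h hr0_1 hr0N, Nat.mod_eq_of_lt (by omega)]; omega
        obtain ⟨hA1, hAN⟩ := cl h hq1 hqN hr0_1 hr0N
        obtain ⟨hB1, hBN⟩ := cl h hq1 hqN (le_refl 1) hN1
        have eq1 : star q r = star (star q (r - 1)) (star q 1) := by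
          have := rec_ap h hq1 hqN hr0_1 hr0N
          rwa [e0] at this
        have eq2 : star (lcomp N star p q) r =
            star (star (lcomp N star p q) (r - 1)) (star (lcomp N star p q) 1) := by
          have := rec_ap h hs1 hsN hr0_1 hr0N
          rwa [e0] at this
        have eq3 : star (lcomp N star p q) (r - 1) = star p (star q (r - 1)) :=
          (iht (r - 1) hr0_1 hr0N (by omega)).symm
        have eq4 : star (lcomp N star p q) 1 = star p (star q 1) := by
          rw [one_ap h hs1 hsN, hsucc, hq_one]
        have eq5 : star p (star (star q (r - 1)) (star q 1)) =
            star (star p (star q (r - 1))) (star p (star q 1)) :=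
          ld_ap hN1 h p (star q (r - 1)) (star q 1) hp1 hpN hA1 hAN hB1 hBN
        rw [eq1, eq5, eq2, eq3, eq4]
  intro r hr1 hrN
  exact key N r hr1 hrN hrN

lemma mod_inj (hN1 : 1 ≤ N) {x y : ℕ} (hx1 : 1 ≤ x) (hxN : x ≤ N)
    (hy1 : 1 ≤ y) (hyN : y ≤ N) (hxy : x % N = y % N) : x = y := by
  by_cases hx : x = N
  · by_cases hy : y = N
    · omega
    · rw [hx, Nat.mod_self, Nat.mod_eq_of_lt (show y < N by omega)] at hxy; omega
  · by_cases hy : y = N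
    · rw [hy, Nat.mod_self, Nat.mod_eq_of_lt (show x < N by omega)] at hxy; omega
    · rwa [Nat.mod_eq_of_lt (show x < N by omega),
        Nat.mod_eq_of_lt (show y < N by omega)] at hxy

lemma lcomp_uniq (hN1 : 1 ≤ N) (h : LaverAxioms N star) {p q : ℕ}
    (hp1 : 1 ≤ p) (hpN : p ≤ N) (hq1 : 1 ≤ q) (hqN : q ≤ N)
    {s : ℕ} (hs1 : 1 ≤ s) (hsN : s ≤ N)
    (hs : ∀ r, 1 ≤ r → r ≤ N → star p (star q r) = star s r) :
    s = lcomp N star p q := by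
  obtain ⟨hl1, hlN, _⟩ := lcomp_bounds hN1 h hp1 hpN (q := q)
  have h1 := hs 1 le_rfl hN1
  have h2 := lcomp_spec hN1 h hp1 hpN hq1 hqN 1 le_rfl hN1
  have h3 : star s 1 = star (lcomp N star p q) 1 := by rw [← h1, h2]
  rw [one_ap h hs1 hsN, one_ap h hl1 hlN] at h3
  exact mod_inj hN1 hs1 hsN hl1 hlN (by omega)

end LaverAux

open LaverAux

/-- in the Laver table of order 2^n there is a composition operation
∘ₙ : for each p, q in {1,...,2^n} there is a unique s with p ⋆ₙ (q ⋆ₙ r) = s ⋆ₙ r for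
all r; it satisfies (p ∘ₙ q) + 1 ≡ p ⋆ₙ (q + 1) mod 2^n (with q+1 taken mod 2^n in
{1,...,2^n}, i.e. as q % 2^n + 1) and is associative. -/
theorem laver_composition (n : ℕ) (star : ℕ → ℕ → ℕ)
    (h : LaverAxioms (2 ^ n) star) :
    ∃ comp : ℕ → ℕ → ℕ,
      (∀ p ∈ Set.Icc 1 (2 ^ n), ∀ q ∈ Set.Icc 1 (2 ^ n),
        comp p q ∈ Set.Icc 1 (2 ^ n) ∧
        (∀ r ∈ Set.Icc 1 (2 ^ n), star p (star q r) = star (comp p q) r) ∧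
        (∀ s ∈ Set.Icc 1 (2 ^ n),
          (∀ r ∈ Set.Icc 1 (2 ^ n), star p (star q r) = star s r) → s = comp p q) ∧
        (comp p q + 1) % 2 ^ n = star p (q % 2 ^ n + 1) % 2 ^ n) ∧
      (∀ p ∈ Set.Icc 1 (2 ^ n), ∀ q ∈ Set.Icc 1 (2 ^ n), ∀ r ∈ Set.Icc 1 (2 ^ n),
        comp (comp p q) r = comp p (comp q r)) := by
  have hN1 : 1 ≤ 2 ^ n := Nat.one_le_two_pow
  refine ⟨lcomp (2 ^ n) star, ?_, ?_⟩
  · intro p hp q hq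
    obtain ⟨hp1, hpN⟩ := Set.mem_Icc.mp hp
    obtain ⟨hq1, hqN⟩ := Set.mem_Icc.mp hq
    obtain ⟨hl1, hlN, hlsucc⟩ := lcomp_bounds hN1 h hp1 hpN (q := q)
    refine ⟨mem_icc hl1 hlN, ?_, ?_, ?_⟩
    · intro r hr
      obtain ⟨hr1, hrN⟩ := Set.mem_Icc.mp hr
      exact lcomp_spec hN1 h hp1 hpN hq1 hqN r hr1 hrN
    · intro s hsmem hsall
      obtain ⟨hs1, hsN⟩ := Set.mem_Icc.mp hsmem
      exact lcomp_uniq hN1 h hp1 hpN hq1 hqN hs1 hsN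
        (fun r hr1 hrN => hsall r (mem_icc hr1 hrN))
    · by_cases hl : lcomp (2 ^ n) star p q = 2 ^ n
      · rw [hl, ← hlsucc, hl, Nat.mod_self]
        exact (Nat.add_mod_left (2 ^ n) 1)
      · have : lcomp (2 ^ n) star p q % 2 ^ n = lcomp (2 ^ n) star p q :=
          Nat.mod_eq_of_lt (by omega)
        rw [← hlsucc, this]
  · intro p hp q hq r hr
    obtain ⟨hp1, hpN⟩ := Set.mem_Icc.mp hp
    obtain ⟨hq1, hqN⟩ := Set.mem_Icc.mp hq
    obtain ⟨hr1, hrN⟩ := Set.mem_Icc.mp hr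
    obtain ⟨hpq1, hpqN, _⟩ := lcomp_bounds hN1 h hp1 hpN (q := q)
    obtain ⟨hqr1, hqrN, _⟩ := lcomp_bounds hN1 h hq1 hqN (q := r)
    obtain ⟨hx1, hxN, _⟩ := lcomp_bounds hN1 h hp1 hpN (q := lcomp (2 ^ n) star q r)
    refine (lcomp_uniq hN1 h hpq1 hpqN hr1 hrN hx1 hxN ?_).symm
    intro t ht1 htN
    obtain ⟨hrt1, hrtN⟩ := cl h hr1 hrN ht1 htN
    calc star (lcomp (2 ^ n) star p q) (star r t)
        = star p (star q (star r t)) :=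
          (lcomp_spec hN1 h hp1 hpN hq1 hqN (star r t) hrt1 hrtN).symm
      _ = star p (star (lcomp (2 ^ n) star q r) t) := by
          rw [lcomp_spec hN1 h hq1 hqN hr1 hrN t ht1 htN]
      _ = star (lcomp (2 ^ n) star p (lcomp (2 ^ n) star q r)) t :=
          lcomp_spec hN1 h hp1 hpN hqr1 hqrN t ht1 htN
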